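/- Let A and B be p×q real matrices with all entries of B positive. Then there exists a unique z ∈ ℝ with val(A − zB) = 0. -/

import Mathlib

/-- The minimax value of a matrix game over mixed strategies (simplices). -/
noncomputable def matVal {α β : Type*} [Fintype α] [Fintype β]
    (M : Matrix α β ℝ) : ℝ :=
  ⨆ s : stdSimplex ℝ α, ⨅ t : stdSimplex ℝ β, ∑ a, ∑ b, s.1 a * M a b * t.1 b

open Finset

section Aux

variable {α β : Type*} [Fintype α] [Fintype β] [Nonempty α] [Nonempty β]

/-- payoff -/
noncomputable def gpay (M : Matrix α β ℝ) (s : stdSimplex ℝ α) (t : stdSimplex ℝ β) : ℝ :=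
  ∑ a, ∑ b, s.1 a * M a b * t.1 b

instance : Nonempty (stdSimplex ℝ α) := by
  classical
  exact ⟨⟨_, single_mem_stdSimplex ℝ (Classical.arbitrary α)⟩⟩

lemma gpay_abs_le (M : Matrix α β ℝ) (s : stdSimplex ℝ α) (t : stdSimplex ℝ β) :
    |gpay M s t| ≤ ∑ a, ∑ b, |M a b| := by
  have hs1 : ∀ a, s.1 a ≤ 1 := by
    intro a
    have := Finset.single_le_sum (f := s.1) (fun i _ => s.2.1 i) (mem_univ a)
    simpa [s.2.2] using this
  have ht1 : ∀ b, t.1 b ≤ 1 := by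
    intro b
    have := Finset.single_le_sum (f := t.1) (fun i _ => t.2.1 i) (mem_univ b)
    simpa [t.2.2] using this
  calc |gpay M s t| ≤ ∑ a, |∑ b, s.1 a * M a b * t.1 b| := Finset.abs_sum_le_sum_abs _ _
    _ ≤ ∑ a, ∑ b, |s.1 a * M a b * t.1 b| :=
        Finset.sum_le_sum fun a _ => Finset.abs_sum_le_sum_abs _ _
    _ ≤ ∑ a, ∑ b, |M a b| := by
        refine Finset.sum_le_sum fun a _ => Finset.sum_le_sum fun b _ => ?_
        rw [abs_mul, abs_mul]
        have h1 : |s.1 a| ≤ 1 := by rw [abs_of_nonneg (s.2.1 a)]; exact hs1 a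
        have h2 : |t.1 b| ≤ 1 := by rw [abs_of_nonneg (t.2.1 b)]; exact ht1 b
        calc |s.1 a| * |M a b| * |t.1 b| ≤ 1 * |M a b| * 1 := by
              apply mul_le_mul (mul_le_mul h1 le_rfl (abs_nonneg _) zero_le_one) h2
                (abs_nonneg _)
              positivity
          _ = |M a b| := by ring

lemma matVal_eq (M : Matrix α β ℝ) : matVal M = ⨆ s, ⨅ t, gpay M s t := rfl

lemma bddBelow_gpay (M : Matrix α β ℝ) (s : stdSimplex ℝ α) :
    BddBelow (Set.range (gpay M s)) :=
  ⟨-(∑ a, ∑ b, |M a b|), by rintro x ⟨t, rfl⟩; linarith [abs_le.1 (gpay_abs_le M s t)]⟩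

lemma bddAbove_iInf (M : Matrix α β ℝ) :
    BddAbove (Set.range fun s : stdSimplex ℝ α => ⨅ t, gpay M s t) := by
  refine ⟨∑ a, ∑ b, |M a b|, ?_⟩
  rintro x ⟨s, rfl⟩
  obtain ⟨t⟩ : Nonempty (stdSimplex ℝ β) := inferInstance
  exact le_trans (ciInf_le (bddBelow_gpay M s) t) (abs_le.1 (gpay_abs_le M s t)).2

/-- The key comparison lemma. -/
lemma matVal_le_add (M₁ M₂ : Matrix α β ℝ) (c : ℝ)
    (h : ∀ a b, M₁ a b ≤ M₂ a b + c) : matVal M₁ ≤ matVal M₂ + c := by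
  have hg : ∀ (s : stdSimplex ℝ α) (t : stdSimplex ℝ β), gpay M₁ s t ≤ gpay M₂ s t + c := by
    intro s t
    have key : gpay M₁ s t ≤ ∑ a, ∑ b, s.1 a * (M₂ a b + c) * t.1 b := by
      refine Finset.sum_le_sum fun a _ => Finset.sum_le_sum fun b _ => ?_
      have := h a b
      exact mul_le_mul_of_nonneg_right (mul_le_mul_of_nonneg_left this (s.2.1 a)) (t.2.1 b)
    have expand : ∑ a, ∑ b, s.1 a * (M₂ a b + c) * t.1 b = gpay M₂ s t + c := by
      have : ∀ a, ∑ b, s.1 a * (M₂ a b + c) * t.1 b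
          = (∑ b, s.1 a * M₂ a b * t.1 b) + s.1 a * c := by
        intro a
        have : ∑ b, s.1 a * (M₂ a b + c) * t.1 b
            = (∑ b, s.1 a * M₂ a b * t.1 b) + s.1 a * c * ∑ b, t.1 b := by
          rw [Finset.mul_sum, ← Finset.sum_add_distrib]
          congr 1; ext b; ring
        rw [this, t.2.2, mul_one]
      rw [Finset.sum_congr rfl fun a _ => this a, Finset.sum_add_distrib, ← Finset.sum_mul,
        s.2.2, one_mul, gpay]
    rw [expand] at key; exact key
  rw [matVal_eq, matVal_eq]
  refine ciSup_le fun s => ?_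
  have h1 : ⨅ t, gpay M₁ s t ≤ (⨅ t, gpay M₂ s t) + c := by
    have : (⨅ t, gpay M₁ s t) - c ≤ ⨅ t, gpay M₂ s t := by
      refine le_ciInf fun t => ?_
      have := ciInf_le (bddBelow_gpay M₁ s) t
      linarith [hg s t]
    linarith
  refine le_trans h1 ?_
  have := le_ciSup (bddAbove_iInf M₂) s
  linarith

end Aux

/-- If all entries of `B` are positive, then there is a unique `z ∈ ℝ` with
`val (A - zB) = 0`. -/
theorem stmt8 (p q : ℕ) (hp : 0 < p) (hq : 0 < q)
    (A B : Matrix (Fin p) (Fin q) ℝ) (hB : ∀ a b, 0 < B a b) :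
    ∃! z : ℝ, matVal (A - z • B) = 0 := by
  haveI : Nonempty (Fin p) := ⟨⟨0, hp⟩⟩
  haveI : Nonempty (Fin q) := ⟨⟨0, hq⟩⟩
  set f : ℝ → ℝ := fun z => matVal (A - z • B) with hf
  -- min and max entries of B
  obtain ⟨ab₀⟩ : Nonempty (Fin p × Fin q) := inferInstance
  set m : ℝ := Finset.univ.inf' ⟨ab₀, Finset.mem_univ _⟩ (fun ab : Fin p × Fin q => B ab.1 ab.2)
    with hm
  set Mx : ℝ := Finset.univ.sup' ⟨ab₀, Finset.mem_univ _⟩ (fun ab : Fin p × Fin q => B ab.1 ab.2)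
    with hMx
  have hm_pos : 0 < m := by
    rw [hm]; refine (Finset.lt_inf'_iff _).2 ?_
    exact fun ab _ => hB ab.1 ab.2
  have hm_le : ∀ a b, m ≤ B a b := fun a b =>
    Finset.inf'_le (fun ab : Fin p × Fin q => B ab.1 ab.2) (Finset.mem_univ (a, b))
  have hMx_ge : ∀ a b, B a b ≤ Mx := fun a b =>
    Finset.le_sup' (fun ab : Fin p × Fin q => B ab.1 ab.2) (Finset.mem_univ (a, b))
  have hMx_pos : 0 < Mx := lt_of_lt_of_le hm_pos (le_trans (hm_le ab₀.1 ab₀.2) (hMx_ge _ _))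
  -- key inequalities
  have key₁ : ∀ z₁ z₂ : ℝ, z₁ ≤ z₂ → f z₂ ≤ f z₁ - (z₂ - z₁) * m := by
    intro z₁ z₂ h
    have := matVal_le_add (A - z₂ • B) (A - z₁ • B) (-((z₂ - z₁) * m)) (by
      intro a b
      simp only [Matrix.sub_apply, Matrix.smul_apply, smul_eq_mul]
      nlinarith [hm_le a b])
    simp only [hf]; linarith
  have key₂ : ∀ z₁ z₂ : ℝ, z₁ ≤ z₂ → f z₁ ≤ f z₂ + (z₂ - z₁) * Mx := by
    intro z₁ z₂ h
    have := matVal_le_add (A - z₁ • B) (A - z₂ • B) ((z₂ - z₁) * Mx) (by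
      intro a b
      simp only [Matrix.sub_apply, Matrix.smul_apply, smul_eq_mul]
      nlinarith [hMx_ge a b])
    simp only [hf]; linarith
  -- strict antitone
  have hanti : StrictAnti f := by
    intro z₁ z₂ h
    have := key₁ z₁ z₂ h.le
    nlinarith
  -- Lipschitz continuity
  have hlip : LipschitzWith (Real.toNNReal Mx) f := by
    refine LipschitzWith.of_dist_le_mul fun z₁ z₂ => ?_
    rw [Real.coe_toNNReal _ hMx_pos.le, Real.dist_eq, Real.dist_eq]
    rcases le_total z₁ z₂ with h | h
    · have h1 := key₁ z₁ z₂ h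
      have h2 := key₂ z₁ z₂ h
      rw [abs_sub_comm z₁ z₂, abs_of_nonneg (by linarith : (0:ℝ) ≤ z₂ - z₁), abs_le]
      constructor <;> nlinarith [hm_pos, hMx_pos]
    · have h1 := key₁ z₂ z₁ h
      have h2 := key₂ z₂ z₁ h
      rw [abs_of_nonneg (by linarith : (0:ℝ) ≤ z₁ - z₂), abs_le]
      constructor <;> nlinarith [hm_pos, hMx_pos]
  have hcont : Continuous f := hlip.continuous
  -- existence via IVT
  set z₂ : ℝ := |f 0| / m + 1 with hz2
  set z₁ : ℝ := -(|f 0| / m + 1) with hz1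
  have hz12 : z₁ ≤ z₂ := by
    have : 0 ≤ |f 0| / m := div_nonneg (abs_nonneg _) hm_pos.le
    rw [hz1, hz2]; linarith
  have hfz2 : f z₂ ≤ 0 := by
    have h := key₁ 0 z₂ (by rw [hz2]; positivity)
    have hc : (z₂ - 0) * m = |f 0| + m := by
      rw [hz2]; field_simp; ring
    rw [hc] at h
    nlinarith [le_abs_self (f 0), hm_pos]
  have hfz1 : 0 ≤ f z₁ := by
    have hz1le : z₁ ≤ 0 := by
      rw [hz1]
      have : 0 ≤ |f 0| / m := div_nonneg (abs_nonneg _) hm_pos.le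
      linarith
    have h := key₁ z₁ 0 hz1le
    have hc : (0 - z₁) * m = |f 0| + m := by
      rw [hz1]; field_simp; ring
    rw [hc] at h
    nlinarith [neg_abs_le (f 0), hm_pos]
  have : (0 : ℝ) ∈ Set.Icc (f z₂) (f z₁) := ⟨hfz2, hfz1⟩
  have hIVT := intermediate_value_Icc' hz12 hcont.continuousOn this
  obtain ⟨z, _, hz⟩ := hIVT
  refine ⟨z, hz, fun y hy => ?_⟩
  have hy' : f y = 0 := hy
  by_contra hne
  rcases lt_or_gt_of_ne hne with h | h
  · have := hanti h; rw [hy', hz] at this; exact lt_irrefl _ this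
  · have := hanti h; rw [hy', hz] at this; exact lt_irrefl _ this
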